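/- For all nonnegative integers m and n and all real x, the probabilistic r-Bell polynomials satisfy the recurrence φ_{m+n,r}^Y(x) = Σ_{i=0}^{n} Σ_{k=0}^{m} C(n,i) · φ_{i,r}^Y(x) · x^k · (1/k!) · Σ_{j=k}^{m} C(m,j) · Σ_{l_1+⋯+l_k=j, l_i≥1} (j!/(l_1!⋯l_k!)) · r^{m−j} · E[S_k^{n−i} · ∏_{i'=1}^{k} Y_{i'}^{l_{i'}}], where the innermost sum is over all k-tuples (l_1,…,l_k) of positive integers with l_1+⋯+l_k = j. -/

import Mathlib

open MeasureTheory ProbabilityTheory Finset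

noncomputable section

variable {Ω : Type*} [MeasureSpace Ω]

/-- Partial sums `S_k = Y_1 + ⋯ + Y_k` (with `S_0 = 0`). -/
def S (Y : ℕ → Ω → ℝ) (k : ℕ) (ω : Ω) : ℝ := ∑ i ∈ Finset.range k, Y i ω

/-- The probabilistic r-Stirling numbers of the second kind associated with `Y`:
`{n+r brace k+r}_{r,Y} = (1/k!) ∑_{j=0}^{k} C(k,j) (−1)^{k−j} E[(S_j + r)^n]`. -/
def probRStirling (Y : ℕ → Ω → ℝ) (r n k : ℕ) : ℝ :=
  ((k.factorial : ℝ))⁻¹ *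
    ∑ j ∈ Finset.range (k + 1), (k.choose j : ℝ) * (-1) ^ (k - j) *
      ∫ ω, (S Y j ω + (r : ℝ)) ^ n

/-- The probabilistic r-Bell polynomials associated with `Y`:
`φ_{n,r}^Y(x) = ∑_{k=0}^{n} {n+r brace k+r}_{r,Y} x^k`. -/
def phiRBell (Y : ℕ → Ω → ℝ) (r n : ℕ) (x : ℝ) : ℝ :=
  ∑ k ∈ Finset.range (n + 1), probRStirling Y r n k * x ^ k

/-- k-tuples of positive integers summing to `j`. -/
def posTuples (k j : ℕ) : Finset (Fin k → ℕ) :=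
  (Finset.Nat.antidiagonalTuple k j).filter fun l => ∀ i, 0 < l i

open PowerSeries



section Aux
variable {R : Type*} [CommSemiring R]

lemma sum_antidiagonalTuple_succ {M : Type*} [AddCommMonoid M] (k j : ℕ)
    (g : (Fin (k+1) → ℕ) → M) :
    ∑ t ∈ Finset.Nat.antidiagonalTuple (k+1) j, g t
      = ∑ p ∈ Finset.HasAntidiagonal.antidiagonal j, ∑ l ∈ Finset.Nat.antidiagonalTuple k p.2,
          g (Fin.cons p.1 l) := by
  rw [show (∑ p ∈ Finset.HasAntidiagonal.antidiagonal j, ∑ l ∈ Finset.Nat.antidiagonalTuple k p.2,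
          g (Fin.cons p.1 l))
      = ∑ q ∈ (Finset.HasAntidiagonal.antidiagonal j).sigma (fun p => Finset.Nat.antidiagonalTuple k p.2),
          g (Fin.cons q.1.1 q.2) from Finset.sum_sigma' _ _ _]
  symm
  refine Finset.sum_nbij' (i := fun q => Fin.cons q.1.1 q.2)
    (j := fun t => ⟨(t 0, ∑ i : Fin k, t i.succ), fun i => t i.succ⟩) ?_ ?_ ?_ ?_ ?_
  · intro q hq
    simp only [Finset.mem_sigma, Finset.HasAntidiagonal.mem_antidiagonal,
      Finset.Nat.mem_antidiagonalTuple] at hq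
    simp only [Finset.Nat.mem_antidiagonalTuple, Fin.sum_univ_succ, Fin.cons_zero, Fin.cons_succ,
      hq.2, hq.1]
  · intro t ht
    simp only [Finset.Nat.mem_antidiagonalTuple] at ht
    simp only [Finset.mem_sigma, Finset.HasAntidiagonal.mem_antidiagonal, Finset.Nat.mem_antidiagonalTuple]
    exact ⟨by rw [← ht, Fin.sum_univ_succ], trivial⟩
  · intro q hq
    obtain ⟨⟨p1, p2⟩, l⟩ := q
    simp only [Finset.mem_sigma, Finset.HasAntidiagonal.mem_antidiagonal,
      Finset.Nat.mem_antidiagonalTuple] at hq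
    simp only [Fin.cons_zero, Fin.cons_succ]
    rw [hq.2]
  · intro t ht
    exact Fin.cons_self_tail t
  · intro q hq; rfl

lemma coeff_prod_fin : ∀ (k : ℕ) (F : Fin k → PowerSeries R) (j : ℕ),
    coeff j (∏ i, F i) = ∑ l ∈ Finset.Nat.antidiagonalTuple k j, ∏ i, coeff (l i) (F i) := by
  intro k
  induction k with
  | zero =>
    intro F j
    simp only [Finset.univ_eq_empty, Finset.prod_empty]
    rcases Nat.eq_zero_or_pos j with h | h
    · subst h; simp [Finset.Nat.antidiagonalTuple_zero_zero]
    · rw [coeff_one]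
      rw [Finset.Nat.antidiagonalTuple]
      obtain ⟨j', rfl⟩ := Nat.exists_eq_add_of_lt h
      simp [Finset.Nat.antidiagonalTuple_zero_succ]
  | succ k ih =>
    intro F j
    rw [Fin.prod_univ_succ, coeff_mul, sum_antidiagonalTuple_succ]
    refine Finset.sum_congr rfl fun p hp => ?_
    rw [ih, Finset.mul_sum]
    refine Finset.sum_congr rfl fun l hl => ?_
    rw [Fin.prod_univ_succ]
    simp [Fin.cons_zero, Fin.cons_succ]

lemma coeff_pow_fin (k j : ℕ) (F : PowerSeries R) :
    coeff j (F ^ k) = ∑ l ∈ Finset.Nat.antidiagonalTuple k j, ∏ i, coeff (l i) F := by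
  rw [← coeff_prod_fin k (fun _ => F) j, Finset.prod_const, Finset.card_univ, Fintype.card_fin]

end Aux


noncomputable section Aux2

lemma posTuples_aux {k j : ℕ} (hjk : j < k) (l : Fin k → ℕ) (hl : ∑ i, l i = j) :
    ∃ i, l i = 0 := by
  by_contra h
  push_neg at h
  have : k ≤ ∑ i, l i := by
    calc (k : ℕ) = ∑ _i : Fin k, 1 := by simp
    _ ≤ ∑ i, l i := Finset.sum_le_sum fun i _ => Nat.one_le_iff_ne_zero.2 (h i)
  omega

lemma coeff_pow_eq_zero_of_lt {R : Type*} [CommSemiring R] {F : PowerSeries R}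
    (h : constantCoeff F = 0) {j k : ℕ} (hjk : j < k) : coeff j (F ^ k) = 0 := by
  rw [coeff_pow_fin]
  refine Finset.sum_eq_zero fun l hl => ?_
  rw [Finset.Nat.mem_antidiagonalTuple] at hl
  obtain ⟨i, hi⟩ := posTuples_aux hjk l hl
  refine Finset.prod_eq_zero (Finset.mem_univ i) ?_
  rw [hi, coeff_zero_eq_constantCoeff, h]

/-- EGF-style exponential series with parameter. -/
def Eser (c : ℝ) : PowerSeries ℝ := PowerSeries.mk fun q => c ^ q / q.factorial

/-- EGF of the moments. -/
def Mser (mu : ℕ → ℝ) : PowerSeries ℝ := PowerSeries.mk fun q => mu q / q.factorial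

/-- Second coefficient extraction of a bivariate series. -/
def c2 (a b : ℕ) (F : PowerSeries (PowerSeries ℝ)) : ℝ :=
  coeff b (coeff a F)

/-- The diagonal embedding `t ↦ s + u`. -/
def Delta (f : PowerSeries ℝ) : PowerSeries (PowerSeries ℝ) :=
  PowerSeries.mk fun a => PowerSeries.mk fun b => ((a+b).choose a : ℝ) * coeff (a+b) f

lemma c2_Delta (a b : ℕ) (f : PowerSeries ℝ) :
    c2 a b (Delta f) = ((a+b).choose a : ℝ) * coeff (a+b) f := by
  simp [c2, Delta, coeff_mk]

lemma Delta_one : Delta 1 = 1 := by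
  ext a b
  rw [show (coeff a) (Delta 1) = PowerSeries.mk fun b => ((a+b).choose a : ℝ) * coeff (a+b) 1 from coeff_mk _ _]
  rw [coeff_mk]
  rcases Nat.eq_zero_or_pos a with rfl | ha
  · rcases Nat.eq_zero_or_pos b with rfl | hb
    · simp
    · simp [coeff_one, Nat.pos_iff_ne_zero.1 hb]
  · have : a + b ≠ 0 := by omega
    simp [coeff_one, this, Nat.pos_iff_ne_zero.1 ha]

lemma Delta_sub (f g : PowerSeries ℝ) : Delta (f - g) = Delta f - Delta g := by
  ext a b
  simp only [Delta, map_sub, coeff_mk, mul_sub]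

lemma Delta_mul (f g : PowerSeries ℝ) : Delta (f * g) = Delta f * Delta g := by
  ext a b
  have hL : c2 a b (Delta (f * g))
      = ∑ uv ∈ Finset.HasAntidiagonal.antidiagonal (a+b), ((a+b).choose a : ℝ) * (coeff uv.1 f * coeff uv.2 g) := by
    rw [c2_Delta, coeff_mul, Finset.mul_sum]
  have hR : c2 a b (Delta f * Delta g)
      = ∑ p ∈ Finset.HasAntidiagonal.antidiagonal a, ∑ q ∈ Finset.HasAntidiagonal.antidiagonal b,
          ((p.1+q.1).choose p.1 : ℝ) * coeff (p.1+q.1) f *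
            (((p.2+q.2).choose p.2 : ℝ) * coeff (p.2+q.2) g) := by
    show coeff b (coeff a (Delta f * Delta g)) = _
    rw [PowerSeries.coeff_mul, map_sum]
    refine Finset.sum_congr rfl fun p hp => ?_
    rw [PowerSeries.coeff_mul, Delta, Delta, coeff_mk, coeff_mk]
    refine Finset.sum_congr rfl fun q hq => ?_
    simp [coeff_mk]
  show c2 a b (Delta (f*g)) = c2 a b (Delta f * Delta g)
  rw [hL, hR]
  -- reindex the RHS double sum: (p, q) ↦ ((p1+q1, p2+q2), (p1, p2))
  have key : ∀ uv ∈ Finset.HasAntidiagonal.antidiagonal (a+b),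
      ((a+b).choose a : ℝ) * (coeff uv.1 f * coeff uv.2 g)
        = ∑ ij ∈ Finset.HasAntidiagonal.antidiagonal a, ((uv.1.choose ij.1 : ℝ) * (uv.2.choose ij.2 : ℝ))
            * (coeff uv.1 f * coeff uv.2 g) := by
    intro uv huv
    rw [← Finset.sum_mul]
    congr 1
    rw [Finset.HasAntidiagonal.mem_antidiagonal] at huv
    rw [← huv, Nat.add_choose_eq]
    push_cast
    rfl
  rw [Finset.sum_congr rfl key]
  -- now both sides are sums over pairs
  rw [Finset.sum_sigma'  (Finset.HasAntidiagonal.antidiagonal (a+b)) (fun _ => Finset.HasAntidiagonal.antidiagonal a)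
    (fun uv ij => ((uv.1.choose ij.1 : ℝ) * (uv.2.choose ij.2 : ℝ)) * (coeff uv.1 f * coeff uv.2 g)),
    Finset.sum_sigma' (Finset.HasAntidiagonal.antidiagonal a) (fun _ => Finset.HasAntidiagonal.antidiagonal b)
    (fun p q => ((p.1+q.1).choose p.1 : ℝ) * coeff (p.1+q.1) f *
            (((p.2+q.2).choose p.2 : ℝ) * coeff (p.2+q.2) g))]
  -- kill zero terms on the left where ij.1 > uv.1 or ij.2 > uv.2
  rw [← Finset.sum_filter_add_sum_filter_not
    ((Finset.HasAntidiagonal.antidiagonal (a+b)).sigma (fun _ => Finset.HasAntidiagonal.antidiagonal a))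
    (fun q => q.2.1 ≤ q.1.1 ∧ q.2.2 ≤ q.1.2)]
  have hzero : ∑ q ∈ ((Finset.HasAntidiagonal.antidiagonal (a+b)).sigma (fun _ => Finset.HasAntidiagonal.antidiagonal a)).filter
      (fun q => ¬(q.2.1 ≤ q.1.1 ∧ q.2.2 ≤ q.1.2)),
      ((q.1.1.choose q.2.1 : ℝ) * (q.1.2.choose q.2.2 : ℝ)) * (coeff q.1.1 f * coeff q.1.2 g) = 0 := by
    refine Finset.sum_eq_zero fun q hq => ?_
    rw [Finset.mem_filter] at hq
    rcases not_and_or.1 hq.2 with h | h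
    · rw [Nat.choose_eq_zero_of_lt (by omega)]
      push_cast
      ring
    · have hz : q.1.2.choose q.2.2 = 0 := Nat.choose_eq_zero_of_lt (by omega)
      rw [hz]
      push_cast
      ring
  rw [hzero, add_zero]
  refine Finset.sum_nbij' (i := fun q => ⟨q.2, (q.1.1 - q.2.1, q.1.2 - q.2.2)⟩)
    (j := fun p => ⟨(p.1.1 + p.2.1, p.1.2 + p.2.2), p.1⟩) ?_ ?_ ?_ ?_ ?_
  · intro q hq
    simp only [Finset.mem_filter, Finset.mem_sigma, Finset.HasAntidiagonal.mem_antidiagonal] at hq ⊢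
    omega
  · intro p hp
    simp only [Finset.mem_filter, Finset.mem_sigma, Finset.HasAntidiagonal.mem_antidiagonal] at hp ⊢
    omega
  · intro q hq
    simp only [Finset.mem_filter, Finset.mem_sigma, Finset.HasAntidiagonal.mem_antidiagonal] at hq
    have h1 : q.2.1 + (q.1.1 - q.2.1) = q.1.1 := by omega
    have h2 : q.2.2 + (q.1.2 - q.2.2) = q.1.2 := by omega
    obtain ⟨⟨u, v⟩, i, j⟩ := q
    simp only at h1 h2 ⊢
    rw [h1, h2]
  · intro p hp
    obtain ⟨⟨p1, p2⟩, q1, q2⟩ := p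
    simp only [Nat.add_sub_cancel_left]
  · intro q hq
    simp only [Finset.mem_filter, Finset.mem_sigma, Finset.HasAntidiagonal.mem_antidiagonal] at hq
    have h1 : q.2.1 + (q.1.1 - q.2.1) = q.1.1 := by omega
    have h2 : q.2.2 + (q.1.2 - q.2.2) = q.1.2 := by omega
    rw [h1, h2]
    beta_reduce
    ring

end Aux2

noncomputable section Aux3

lemma choose_fact_aux (a b : ℕ) :
    (((a+b).choose a : ℝ)) * (((a+b).factorial : ℝ))⁻¹
      = ((a.factorial : ℝ))⁻¹ * ((b.factorial : ℝ))⁻¹ := by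
  have h := Nat.add_choose_mul_factorial_mul_factorial a b
  have hsymm : (a+b).choose a = (a+b).choose b := by
    rw [← Nat.choose_symm (Nat.le_add_right a b)]
    congr 1
    omega
  have h' : (((a+b).choose a : ℝ)) * (a.factorial : ℝ) * (b.factorial : ℝ)
      = ((a+b).factorial : ℝ) := by
    rw [hsymm]
    exact_mod_cast congrArg (Nat.cast : ℕ → ℝ) h
  have ha : (a.factorial : ℝ) ≠ 0 := Nat.cast_ne_zero.2 (Nat.factorial_ne_zero a)
  have hb : (b.factorial : ℝ) ≠ 0 := Nat.cast_ne_zero.2 (Nat.factorial_ne_zero b)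
  have hab : ((a+b).factorial : ℝ) ≠ 0 := Nat.cast_ne_zero.2 (Nat.factorial_ne_zero _)
  field_simp
  linarith [h']

lemma Delta_pow (f : PowerSeries ℝ) (k : ℕ) : Delta (f ^ k) = (Delta f) ^ k := by
  induction k with
  | zero => simpa using Delta_one
  | succ k ih => rw [pow_succ, pow_succ, Delta_mul, ih]

lemma Delta_Eser (r : ℝ) :
    Delta (Eser r) = (PowerSeries.map (PowerSeries.C (R := ℝ)) (Eser r)) *
      (PowerSeries.C (Eser r)) := by
  ext a b
  have hL : (coeff b) ((coeff a) (Delta (Eser r)))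
      = ((a+b).choose a : ℝ) * (r ^ (a+b) / (a+b).factorial) := by
    simp [Delta, coeff_mk, Eser]
  have hR : (coeff b) ((coeff a)
        ((PowerSeries.map (PowerSeries.C (R := ℝ)) (Eser r)) * (PowerSeries.C (Eser r))))
      = (r ^ a / a.factorial) * (r ^ b / b.factorial) := by
    rw [mul_comm, PowerSeries.coeff_C_mul, PowerSeries.coeff_map]
    simp [Eser, coeff_mk, PowerSeries.coeff_C_mul, mul_comm]
  rw [hL, hR]
  rw [div_eq_mul_inv, div_eq_mul_inv, div_eq_mul_inv, ← mul_assoc, pow_add]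
  rw [mul_comm (((a+b).choose a : ℝ)) _, mul_assoc, choose_fact_aux]
  ring

/-- Bivariate series of mixed moments with positive first exponent. -/
def DD (mu : ℕ → ℝ) : PowerSeries (PowerSeries ℝ) :=
  PowerSeries.mk fun a => if a = 0 then 0 else
    PowerSeries.mk fun b => ((a+b).choose a : ℝ) * (mu (a+b) / (a+b).factorial)

lemma Delta_Mser_split (mu : ℕ → ℝ) :
    Delta (Mser mu) - 1 = DD mu + PowerSeries.C (Mser mu - 1) := by
  ext a b
  have e1 : (coeff a) (Delta (Mser mu) - 1)
      = coeff a (Delta (Mser mu)) - coeff a 1 := map_sub _ _ _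
  have e2 : (coeff a) (DD mu + PowerSeries.C (Mser mu - 1))
      = coeff a (DD mu)
        + coeff a (PowerSeries.C (Mser mu - 1)) := map_add _ _ _
  rw [e1, e2]
  rcases Nat.eq_zero_or_pos a with rfl | ha
  · have h1 : (coeff 0) (DD mu) = 0 := by simp [DD, coeff_mk]
    have h2 : (coeff 0) (PowerSeries.C (Mser mu - 1))
        = Mser mu - 1 := by simp
    rw [h1, h2, zero_add]
    have h3 : (coeff 0) (1 : PowerSeries (PowerSeries ℝ)) = 1 := by simp
    rw [h3]
    simp [Delta, coeff_mk, Mser]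
  · have ha' : a ≠ 0 := Nat.pos_iff_ne_zero.1 ha
    have h1 : (coeff a) (DD mu)
        = PowerSeries.mk fun b => ((a+b).choose a : ℝ) * (mu (a+b) / (a+b).factorial) := by
      simp [DD, coeff_mk, ha']
    have h2 : (coeff a) (PowerSeries.C (Mser mu - 1)) = 0 := by
      simp [PowerSeries.coeff_C, ha']
    have h3 : (coeff a) (1 : PowerSeries (PowerSeries ℝ)) = 0 := by
      simp [PowerSeries.coeff_one, ha']
    rw [h1, h2, h3, add_zero, sub_zero]
    simp [Delta, Mser, coeff_mk]

lemma constantCoeff_Mser_sub_one (mu : ℕ → ℝ) (hmu0 : mu 0 = 1) :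
    constantCoeff (Mser mu - 1) = 0 := by
  simp [Mser, ← PowerSeries.coeff_zero_eq_constantCoeff, coeff_mk, hmu0]

lemma coeff_Eser_mul_pow_eq_zero (mu : ℕ → ℝ) (hmu0 : mu 0 = 1) (r : ℝ) {i a : ℕ} (h : i < a) :
    coeff i (Eser r * (Mser mu - 1) ^ a) = 0 := by
  rw [PowerSeries.coeff_mul]
  refine Finset.sum_eq_zero fun p hp => ?_
  rw [Finset.HasAntidiagonal.mem_antidiagonal] at hp
  have : p.2 < a := by omega
  rw [coeff_pow_eq_zero_of_lt (constantCoeff_Mser_sub_one mu hmu0) this, mul_zero]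

lemma constantCoeff_DD (mu : ℕ → ℝ) : constantCoeff (DD mu) = 0 := by
  simp [DD, ← PowerSeries.coeff_zero_eq_constantCoeff, coeff_mk]

end Aux3

noncomputable section Aux4

lemma c2_DD_pow (mu : ℕ → ℝ) (k j q : ℕ) :
    c2 j q (DD mu ^ k) = ∑ l ∈ posTuples k j, ∑ t ∈ Finset.Nat.antidiagonalTuple k q,
      ∏ i, (((l i + t i).choose (l i) : ℝ) * (mu (l i + t i) / (l i + t i).factorial)) := by
  rw [c2, coeff_pow_fin, map_sum]
  rw [← Finset.sum_filter_add_sum_filter_not (Finset.Nat.antidiagonalTuple k j)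
    (fun l => ∀ i, 0 < l i)]
  have hz : ∑ l ∈ (Finset.Nat.antidiagonalTuple k j).filter (fun l => ¬ ∀ i, 0 < l i),
      coeff q (∏ i, coeff (l i) (DD mu)) = 0 := by
    refine Finset.sum_eq_zero fun l hl => ?_
    rw [Finset.mem_filter] at hl
    push_neg at hl
    obtain ⟨i, hi⟩ := hl.2
    have : coeff (l i) (DD mu) = 0 := by
      have : l i = 0 := by omega
      simp [DD, coeff_mk, this]
    rw [Finset.prod_eq_zero (Finset.mem_univ i) this, map_zero]
  rw [hz, add_zero]
  refine Finset.sum_congr rfl fun l hl => ?_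
  rw [posTuples, Finset.mem_filter] at hl
  have hc : ∀ i : Fin k, coeff (l i) (DD mu)
      = PowerSeries.mk fun b => ((l i + b).choose (l i) : ℝ) * (mu (l i + b) / (l i + b).factorial) := by
    intro i
    have : l i ≠ 0 := Nat.pos_iff_ne_zero.1 (hl.2 i)
    simp [DD, coeff_mk, this]
  rw [Finset.prod_congr rfl fun i _ => hc i, coeff_prod_fin]
  refine Finset.sum_congr rfl fun t ht => ?_
  refine Finset.prod_congr rfl fun i _ => ?_
  rw [coeff_mk]

lemma c2_sum {ι : Type*} (s : Finset ι) (F : ι → PowerSeries (PowerSeries ℝ)) (m n : ℕ) :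
    c2 m n (∑ i ∈ s, F i) = ∑ i ∈ s, c2 m n (F i) := by
  rw [c2, map_sum, map_sum]
  rfl

lemma c2_outerE_mul (r : ℝ) (H : PowerSeries (PowerSeries ℝ)) (m q : ℕ) :
    c2 m q (PowerSeries.map (PowerSeries.C (R := ℝ)) (Eser r) * H)
      = ∑ p ∈ Finset.HasAntidiagonal.antidiagonal m, (r ^ p.1 / p.1.factorial) * c2 p.2 q H := by
  rw [c2, PowerSeries.coeff_mul, map_sum]
  refine Finset.sum_congr rfl fun p hp => ?_
  rw [PowerSeries.coeff_map]
  simp only [Eser, coeff_mk]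
  rw [PowerSeries.coeff_C_mul]
  rfl

lemma c2_innerC_mul (g : PowerSeries ℝ) (H : PowerSeries (PowerSeries ℝ)) (m n : ℕ) :
    c2 m n (PowerSeries.C g * H)
      = ∑ p ∈ Finset.HasAntidiagonal.antidiagonal n, coeff p.1 g * c2 m p.2 H := by
  rw [c2, PowerSeries.coeff_C_mul, PowerSeries.coeff_mul]
  rfl

lemma c2_main (mu : ℕ → ℝ) (r : ℝ) (K m n : ℕ) :
    c2 m n (Delta (Eser r * (Mser mu - 1) ^ K))
      = ∑ a ∈ Finset.range (K+1), (K.choose a : ℝ) *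
          ∑ p ∈ Finset.HasAntidiagonal.antidiagonal n, coeff p.1 (Eser r * (Mser mu - 1) ^ a) *
            ∑ pj ∈ Finset.HasAntidiagonal.antidiagonal m,
              (r ^ pj.1 / pj.1.factorial) * c2 pj.2 p.2 (DD mu ^ (K-a)) := by
  have e0 : Delta (Eser r * (Mser mu - 1) ^ K)
      = Delta (Eser r) * (Delta (Mser mu) - 1) ^ K := by
    rw [Delta_mul, Delta_pow, Delta_sub, Delta_one]
  rw [e0, Delta_Eser, Delta_Mser_split]
  have e1 : (DD mu + PowerSeries.C (Mser mu - 1)) ^ K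
      = ∑ a ∈ Finset.range (K+1),
          (PowerSeries.C (Mser mu - 1)) ^ a * (DD mu) ^ (K-a)
            * (K.choose a : PowerSeries (PowerSeries ℝ)) := by
    rw [add_comm]
    exact add_pow _ _ _
  rw [e1, Finset.mul_sum, c2_sum]
  refine Finset.sum_congr rfl fun a ha => ?_
  have e2 : PowerSeries.map (PowerSeries.C (R := ℝ)) (Eser r) * PowerSeries.C (Eser r) *
        ((PowerSeries.C (Mser mu - 1)) ^ a * (DD mu) ^ (K-a)
          * (K.choose a : PowerSeries (PowerSeries ℝ)))
      = (K.choose a) • (PowerSeries.C (Eser r * (Mser mu - 1) ^ a) *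
          (PowerSeries.map (PowerSeries.C (R := ℝ)) (Eser r) * (DD mu) ^ (K-a))) := by
    rw [map_mul, map_pow, nsmul_eq_mul]
    push_cast
    ring
  rw [e2]
  have e3 : ∀ (F : PowerSeries (PowerSeries ℝ)) (c : ℕ), c2 m n (c • F) = (c : ℝ) * c2 m n F := by
    intro F c
    rw [c2, map_nsmul, map_nsmul, nsmul_eq_mul]
    rfl
  rw [e3, c2_innerC_mul]
  congr 1
  refine Finset.sum_congr rfl fun p hp => ?_
  rw [c2_outerE_mul]

end Aux4

noncomputable section Aux5

lemma multinomial_real {k : ℕ} (l : Fin k → ℕ) :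
    (Nat.multinomial Finset.univ l : ℝ)
      = ((∑ i, l i).factorial : ℝ) * ∏ i, (((l i).factorial : ℝ))⁻¹ := by
  have h := Nat.multinomial_spec Finset.univ l
  have h' : (∏ i, ((l i).factorial : ℝ)) * (Nat.multinomial Finset.univ l : ℝ)
      = ((∑ i, l i).factorial : ℝ) := by exact_mod_cast congrArg (Nat.cast : ℕ → ℝ) h
  have hne : ∀ i : Fin k, (((l i).factorial : ℝ)) ≠ 0 :=
    fun i => Nat.cast_ne_zero.2 (Nat.factorial_ne_zero _)
  have hprodne : (∏ i : Fin k, ((l i).factorial : ℝ)) ≠ 0 :=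
    Finset.prod_ne_zero_iff.2 fun i _ => hne i
  rw [show (∏ i : Fin k, (((l i).factorial : ℝ))⁻¹)
      = (∏ i : Fin k, ((l i).factorial : ℝ))⁻¹ from Finset.prod_inv_distrib _]
  rw [← h']
  field_simp

lemma posTuples_eq_empty {k j : ℕ} (h : j < k) : posTuples k j = ∅ := by
  rw [Finset.eq_empty_iff_forall_notMem]
  intro l hl
  rw [posTuples, Finset.mem_filter, Finset.Nat.mem_antidiagonalTuple] at hl
  obtain ⟨i, hi⟩ := posTuples_aux h l hl.1
  have := hl.2 i
  omega

lemma choose_mul_fact_fact {i n : ℕ} (h : i ≤ n) :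
    ((n.choose i : ℝ)) * (i.factorial : ℝ) * ((n - i).factorial : ℝ) = (n.factorial : ℝ) := by
  exact_mod_cast congrArg (Nat.cast : ℕ → ℝ) (Nat.choose_mul_factorial_mul_factorial h)

/-- Combinatorial form of the inner `W` sum. -/
def Wfin (mu : ℕ → ℝ) (r : ℝ) (k m q : ℕ) : ℝ :=
  ∑ j ∈ Finset.Icc k m, (m.choose j : ℝ) *
    ∑ l ∈ posTuples k j, (Nat.multinomial Finset.univ l : ℝ) * r ^ (m-j) *
      (∑ t ∈ Finset.Nat.antidiagonalTuple k q,
        (Nat.multinomial Finset.univ t : ℝ) * ∏ i, mu (l i + t i))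

lemma Wfin_eq (mu : ℕ → ℝ) (r : ℝ) (k m q : ℕ) :
    Wfin mu r k m q = (m.factorial : ℝ) * (q.factorial : ℝ) *
      ∑ pj ∈ Finset.HasAntidiagonal.antidiagonal m, (r ^ pj.1 / pj.1.factorial) * c2 pj.2 q (DD mu ^ k) := by
  rw [Finset.mul_sum, Finset.Nat.sum_antidiagonal_eq_sum_range_succ
    (f := fun p1 p2 => (m.factorial : ℝ) * (q.factorial : ℝ) *
      ((r ^ p1 / p1.factorial) * c2 p2 q (DD mu ^ k)))]
  -- reindex: j := m - a, i.e. use range with second component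
  rw [show (∑ a ∈ Finset.range (m+1), (m.factorial : ℝ) * (q.factorial : ℝ) *
        ((r ^ a / a.factorial) * c2 (m - a) q (DD mu ^ k)))
      = ∑ j ∈ Finset.range (m+1), (m.factorial : ℝ) * (q.factorial : ℝ) *
        ((r ^ (m - j) / (m - j).factorial) * c2 j q (DD mu ^ k)) from
    Finset.sum_nbij' (i := fun a => m - a) (j := fun j => m - j)
      (fun a ha => by simp only [Finset.mem_range] at *; omega)
      (fun j hj => by simp only [Finset.mem_range] at *; omega)
      (fun a ha => by simp only [Finset.mem_range] at ha; show m - (m - a) = a; omega)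
      (fun j hj => by simp only [Finset.mem_range] at hj; show m - (m - j) = j; omega)
      (fun a ha => by
        simp only [Finset.mem_range] at ha
        have : m - (m - a) = a := by omega
        rw [this])]
  rw [Wfin]
  rw [Finset.sum_subset (show Finset.Icc k m ⊆ Finset.range (m+1) from fun j hj => by
      simp only [Finset.mem_Icc] at hj; simp only [Finset.mem_range]; omega)
    (fun j hj hj2 => by
      have hjk : j < k := by
        simp only [Finset.mem_range] at hj
        simp only [Finset.mem_Icc] at hj2
        omega
      rw [posTuples_eq_empty hjk, Finset.sum_empty, mul_zero])]
  · refine Finset.sum_congr rfl fun j hj => ?_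
    rw [Finset.mem_range] at hj
    have hjm : j ≤ m := by omega
    rw [c2_DD_pow]
    simp only [Finset.mul_sum]
    refine Finset.sum_congr rfl fun l hl => ?_
    have hlsum : ∑ i, l i = j := by
      rw [posTuples, Finset.mem_filter, Finset.Nat.mem_antidiagonalTuple] at hl
      exact hl.1
    refine Finset.sum_congr rfl fun t ht => ?_
    have htsum : ∑ i, t i = q := Finset.Nat.mem_antidiagonalTuple.1 ht
    -- per-term identity
    have hprod : ∏ i, (((l i + t i).choose (l i) : ℝ) * (mu (l i + t i) / (l i + t i).factorial))
        = (∏ i, (((l i).factorial : ℝ))⁻¹ * (((t i).factorial : ℝ))⁻¹) * ∏ i, mu (l i + t i) := by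
      rw [← Finset.prod_mul_distrib]
      refine Finset.prod_congr rfl fun i _ => ?_
      rw [div_eq_mul_inv, mul_comm (mu (l i + t i)) _, ← mul_assoc, choose_fact_aux]
    rw [hprod, multinomial_real l, multinomial_real t, hlsum, htsum]
    have hCh : ((m.choose j : ℝ)) * (j.factorial : ℝ) * ((m - j).factorial : ℝ)
        = (m.factorial : ℝ) := choose_mul_fact_fact hjm
    have hfj : (((m-j).factorial : ℝ)) ≠ 0 := Nat.cast_ne_zero.2 (Nat.factorial_ne_zero _)
    rw [Finset.prod_mul_distrib, ← hCh]
    field_simp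

lemma sum_triangle {M : Type*} [AddCommMonoid M] (N : ℕ) (f : ℕ → ℕ → M) :
    ∑ K ∈ Finset.range (N+1), ∑ a ∈ Finset.range (K+1), f a (K - a)
      = ∑ a ∈ Finset.range (N+1), ∑ k ∈ Finset.range (N+1),
          if a + k ≤ N then f a k else 0 := by
  have hR : ∀ a, (∑ k ∈ Finset.range (N+1), if a + k ≤ N then f a k else 0)
      = ∑ k ∈ (Finset.range (N+1)).filter (fun k => a + k ≤ N), f a k := by
    intro a
    rw [Finset.sum_filter]
  rw [Finset.sum_congr rfl fun a _ => hR a]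
  rw [Finset.sum_sigma' (Finset.range (N+1)) (fun K => Finset.range (K+1)) (fun K a => f a (K-a)),
    Finset.sum_sigma' (Finset.range (N+1))
      (fun a => (Finset.range (N+1)).filter (fun k => a + k ≤ N)) (fun a k => f a k)]
  refine Finset.sum_nbij' (i := fun q => ⟨q.2, q.1 - q.2⟩) (j := fun q => ⟨q.1 + q.2, q.1⟩)
    ?_ ?_ ?_ ?_ ?_
  · intro q hq
    simp only [Finset.mem_sigma, Finset.mem_range, Finset.mem_filter] at hq ⊢
    omega
  · intro q hq
    simp only [Finset.mem_sigma, Finset.mem_range, Finset.mem_filter] at hq ⊢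
    omega
  · intro q hq
    simp only [Finset.mem_sigma, Finset.mem_range] at hq
    have h1 : q.2 + (q.1 - q.2) = q.1 := by omega
    obtain ⟨K, a⟩ := q
    simp only at h1 ⊢
    rw [h1]
  · intro q hq
    obtain ⟨a, k⟩ := q
    simp only [Nat.add_sub_cancel_left]
  · intro q hq; rfl

end Aux5

noncomputable section Aux6

lemma choose_real {i n : ℕ} (h : i ≤ n) :
    ((n.choose i : ℝ)) = (n.factorial : ℝ) * ((i.factorial : ℝ))⁻¹ * (((n-i).factorial : ℝ))⁻¹ := by
  have h' := choose_mul_fact_fact h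
  have hi : ((i.factorial : ℝ)) ≠ 0 := Nat.cast_ne_zero.2 (Nat.factorial_ne_zero _)
  have hni : (((n-i).factorial : ℝ)) ≠ 0 := Nat.cast_ne_zero.2 (Nat.factorial_ne_zero _)
  field_simp
  linarith [h']

lemma fact_coeff_eq (m n : ℕ) (f : PowerSeries ℝ) :
    (((m+n).factorial : ℝ)) * coeff (m+n) f
      = (m.factorial : ℝ) * (n.factorial : ℝ) * c2 m n (Delta f) := by
  rw [c2_Delta]
  have h : ((m+n).choose m : ℝ) * (m.factorial : ℝ) * ((m+n-m).factorial : ℝ)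
      = ((m+n).factorial : ℝ) := choose_mul_fact_fact (Nat.le_add_right m n)
  have h2 : m + n - m = n := by omega
  rw [h2] at h
  rw [← h]
  ring

lemma Wfin_eq_zero (mu : ℕ → ℝ) (r : ℝ) {k m : ℕ} (q : ℕ) (h : m < k) :
    Wfin mu r k m q = 0 := by
  rw [Wfin, Finset.Icc_eq_empty (by omega), Finset.sum_empty]

lemma main_alg (mu : ℕ → ℝ) (hmu0 : mu 0 = 1) (r x : ℝ) (m n : ℕ) :
    ∑ K ∈ Finset.range (m+n+1),
        ((K.factorial : ℝ))⁻¹ * (((m+n).factorial : ℝ) * coeff (m+n) (Eser r * (Mser mu - 1)^K)) * x^K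
      = ∑ i ∈ Finset.range (n+1), ∑ k ∈ Finset.range (m+1),
          (n.choose i : ℝ) *
            (∑ a ∈ Finset.range (i+1),
              ((a.factorial : ℝ))⁻¹ * ((i.factorial : ℝ) * coeff i (Eser r * (Mser mu - 1)^a)) * x^a) *
            x^k * ((k.factorial : ℝ))⁻¹ * Wfin mu r k m (n-i) := by
  set N := m + n with hN
  set T : ℕ → ℕ → ℕ → ℝ := fun a k i =>
    (n.choose i : ℝ) * (((a.factorial : ℝ))⁻¹ * ((i.factorial : ℝ) *
        coeff i (Eser r * (Mser mu - 1)^a)) * x^a) * x^k * ((k.factorial : ℝ))⁻¹ *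
      Wfin mu r k m (n-i) with hT
  have hTzero1 : ∀ a k i, i < a → T a k i = 0 := by
    intro a k i h
    rw [hT]
    simp only
    rw [coeff_Eser_mul_pow_eq_zero mu hmu0 r h]
    ring
  have hTzero2 : ∀ a k i, m < k → T a k i = 0 := by
    intro a k i h
    rw [hT]
    simp only
    rw [Wfin_eq_zero mu r _ h]
    ring
  -- RHS = triple sum of T
  have hRHS1 : (∑ i ∈ Finset.range (n+1), ∑ k ∈ Finset.range (m+1),
          (n.choose i : ℝ) *
            (∑ a ∈ Finset.range (i+1),
              ((a.factorial : ℝ))⁻¹ * ((i.factorial : ℝ) * coeff i (Eser r * (Mser mu - 1)^a)) * x^a) *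
            x^k * ((k.factorial : ℝ))⁻¹ * Wfin mu r k m (n-i))
      = ∑ i ∈ Finset.range (n+1), ∑ k ∈ Finset.range (m+1), ∑ a ∈ Finset.range (i+1), T a k i := by
    refine Finset.sum_congr rfl fun i hi => Finset.sum_congr rfl fun k hk => ?_
    simp only [Finset.sum_mul, Finset.mul_sum]
    rfl
  rw [hRHS1]
  -- extend the a-range
  have hext1 : ∀ i ∈ Finset.range (n+1), ∀ k ∈ Finset.range (m+1),
      (∑ a ∈ Finset.range (i+1), T a k i) = ∑ a ∈ Finset.range (N+1), T a k i := by
    intro i hi k hk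
    rw [Finset.mem_range] at hi
    refine Finset.sum_subset (fun a ha => by
      simp only [Finset.mem_range] at *; omega) (fun a ha ha2 => ?_)
    simp only [Finset.mem_range] at ha ha2
    exact hTzero1 a k i (by omega)
  rw [Finset.sum_congr rfl fun i hi => Finset.sum_congr rfl fun k hk => hext1 i hi k hk]
  -- extend the k-range
  have hext2 : ∀ i ∈ Finset.range (n+1),
      (∑ k ∈ Finset.range (m+1), ∑ a ∈ Finset.range (N+1), T a k i)
        = ∑ k ∈ Finset.range (N+1), ∑ a ∈ Finset.range (N+1), T a k i := by
    intro i hi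
    refine Finset.sum_subset (fun k hk => by
      simp only [Finset.mem_range] at *; omega) (fun k hk hk2 => ?_)
    simp only [Finset.mem_range] at hk hk2
    exact Finset.sum_eq_zero fun a _ => hTzero2 a k i (by omega)
  rw [Finset.sum_congr rfl fun i hi => hext2 i hi]
  -- reorder sums
  have hcomm : (∑ i ∈ Finset.range (n+1), ∑ k ∈ Finset.range (N+1), ∑ a ∈ Finset.range (N+1), T a k i)
      = ∑ a ∈ Finset.range (N+1), ∑ k ∈ Finset.range (N+1), ∑ i ∈ Finset.range (n+1), T a k i := by
    rw [Finset.sum_comm]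
    refine Eq.trans (Finset.sum_congr rfl fun k _ => Finset.sum_comm) ?_
    rw [Finset.sum_comm]
  rw [hcomm]
  -- insert the triangle condition
  have htri : (∑ a ∈ Finset.range (N+1), ∑ k ∈ Finset.range (N+1), ∑ i ∈ Finset.range (n+1), T a k i)
      = ∑ a ∈ Finset.range (N+1), ∑ k ∈ Finset.range (N+1),
          if a + k ≤ N then (∑ i ∈ Finset.range (n+1), T a k i) else 0 := by
    refine Finset.sum_congr rfl fun a _ => Finset.sum_congr rfl fun k _ => ?_
    by_cases h : a + k ≤ N
    · rw [if_pos h]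
    · rw [if_neg h]
      refine Finset.sum_eq_zero fun i hi => ?_
      rw [Finset.mem_range] at hi
      rcases Nat.lt_or_ge i a with h1 | h1
      · exact hTzero1 a k i h1
      · refine hTzero2 a k i ?_
        omega
  rw [htri, ← sum_triangle N (fun a k => ∑ i ∈ Finset.range (n+1), T a k i)]
  -- now match per K
  refine Finset.sum_congr rfl fun K hK => ?_
  rw [Finset.mem_range] at hK
  rw [fact_coeff_eq m n, c2_main mu r K m n]
  simp only [Finset.mul_sum, Finset.sum_mul]
  refine Finset.sum_congr rfl fun a ha => ?_
  rw [Finset.mem_range] at ha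
  rw [Finset.Nat.sum_antidiagonal_eq_sum_range_succ_mk]
  refine Finset.sum_congr rfl fun i hi => ?_
  rw [Finset.mem_range] at hi
  rw [hT]
  simp only
  rw [Wfin_eq mu r (K-a) m (n-i)]
  have hx : x ^ K = x ^ a * x ^ (K-a) := by
    rw [← pow_add]
    congr 1
    omega
  rw [hx, choose_real (show a ≤ K by omega), choose_real (show i ≤ n by omega)]
  simp only [Finset.mul_sum, Finset.sum_mul, div_eq_mul_inv]
  refine Finset.sum_congr rfl fun pj hpj => ?_
  have f1 : ((K.factorial : ℝ)) ≠ 0 := Nat.cast_ne_zero.2 (Nat.factorial_ne_zero _)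
  have f2 : ((a.factorial : ℝ)) ≠ 0 := Nat.cast_ne_zero.2 (Nat.factorial_ne_zero _)
  have f3 : (((K-a).factorial : ℝ)) ≠ 0 := Nat.cast_ne_zero.2 (Nat.factorial_ne_zero _)
  have f4 : ((i.factorial : ℝ)) ≠ 0 := Nat.cast_ne_zero.2 (Nat.factorial_ne_zero _)
  have f5 : (((n-i).factorial : ℝ)) ≠ 0 := Nat.cast_ne_zero.2 (Nat.factorial_ne_zero _)
  have f6 : ((pj.1.factorial : ℝ)) ≠ 0 := Nat.cast_ne_zero.2 (Nat.factorial_ne_zero _)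
  field_simp

end Aux6

noncomputable section Prob
open MeasureTheory ProbabilityTheory

variable {Ω : Type*} [MeasureSpace Ω]

def S' (Y : ℕ → Ω → ℝ) (k : ℕ) (ω : Ω) : ℝ := ∑ i ∈ Finset.range k, Y i ω

variable [IsProbabilityMeasure (volume : Measure Ω)]
    (Y : ℕ → Ω → ℝ) (Y₀ : Ω → ℝ)
    (hMeas : ∀ i, Measurable (Y i))
    (hIndep : iIndepFun Y volume)
    (hId : ∀ i, IdentDistrib (Y i) Y₀ volume volume)
    (hInt : ∀ q : ℕ, Integrable fun ω => (Y₀ ω) ^ q)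

section
include hId hInt

lemma int_pow_eq (i q : ℕ) :
    Integrable (fun ω => (Y i ω) ^ q) ∧ (∫ ω, (Y i ω) ^ q) = ∫ ω, (Y₀ ω) ^ q := by
  have h := (hId i).comp (measurable_id.pow_const q)
  exact ⟨h.integrable_iff.2 (hInt q), h.integral_eq⟩

end

section
include hMeas hIndep hId hInt

lemma int_prod (s : Finset ℕ) (e : ℕ → ℕ) :
    Integrable (fun ω => ∏ i ∈ s, (Y i ω) ^ (e i)) ∧
      (∫ ω, ∏ i ∈ s, (Y i ω) ^ (e i)) = ∏ i ∈ s, ∫ ω, (Y₀ ω) ^ (e i) := by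
  induction s using Finset.cons_induction with
  | empty =>
    constructor
    · simpa using integrable_const (1:ℝ)
    · simp
  | cons i s hi ih =>
    have hind : iIndepFun (fun j => fun ω => (Y j ω) ^ (e j)) volume :=
      hIndep.comp (fun j y => y ^ (e j)) (fun j => measurable_id.pow_const _)
    have hindep : IndepFun (∏ j ∈ s, fun ω => (Y j ω) ^ (e j)) (fun ω => (Y i ω) ^ (e i)) volume :=
      hind.indepFun_finsetProd_of_notMem (fun j => (hMeas j).pow_const _) hi
    have hprodeq : (∏ j ∈ s, fun ω => (Y j ω) ^ (e j)) = fun ω => ∏ j ∈ s, (Y j ω) ^ (e j) := by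
      funext ω
      exact Finset.prod_apply ω s _
    rw [hprodeq] at hindep
    have hfi := int_pow_eq Y Y₀ hId hInt i (e i)
    have hintmul : Integrable ((fun ω => ∏ j ∈ s, (Y j ω) ^ (e j)) * (fun ω => (Y i ω) ^ (e i))) volume :=
      hindep.integrable_mul ih.1 hfi.1
    have hmul := hindep.integral_mul_eq_mul_integral ih.1.aestronglyMeasurable hfi.1.aestronglyMeasurable
    constructor
    · have : (fun ω => ∏ j ∈ Finset.cons i s hi, (Y j ω) ^ (e j))
          = (fun ω => ∏ j ∈ s, (Y j ω) ^ (e j)) * (fun ω => (Y i ω) ^ (e i)) := by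
        funext ω
        simp only [Finset.prod_cons, Pi.mul_apply]
        ring
      rw [this]
      exact hintmul
    · have h1 : (∫ ω, ∏ j ∈ Finset.cons i s hi, (Y j ω) ^ (e j))
          = ∫ ω, ((fun ω => ∏ j ∈ s, (Y j ω) ^ (e j)) * (fun ω => (Y i ω) ^ (e i))) ω := by
        congr 1
        funext ω
        simp only [Finset.prod_cons, Pi.mul_apply]
        ring
      rw [h1]
      rw [show (∫ ω, ((fun ω => ∏ j ∈ s, (Y j ω) ^ (e j)) * (fun ω => (Y i ω) ^ (e i))) ω)
        = ∫ ω, ((fun ω => ∏ j ∈ s, (Y j ω) ^ (e j)) * (fun ω => (Y i ω) ^ (e i))) ω from rfl]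
      rw [hmul, Finset.prod_cons, ih.2, hfi.2]
      ring

lemma int_prod_fin (k : ℕ) (e : Fin k → ℕ) :
    Integrable (fun ω => ∏ i' : Fin k, (Y i' ω) ^ (e i')) ∧
      (∫ ω, ∏ i' : Fin k, (Y i' ω) ^ (e i')) = ∏ i' : Fin k, ∫ ω, (Y₀ ω) ^ (e i') := by
  set e' : ℕ → ℕ := fun q => if h : q < k then e ⟨q, h⟩ else 0 with he'
  have hconv : ∀ ω, (∏ i' : Fin k, (Y i' ω) ^ (e i')) = ∏ i ∈ Finset.range k, (Y i ω) ^ (e' i) := by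
    intro ω
    rw [← Fin.prod_univ_eq_prod_range (fun i => (Y i ω) ^ (e' i)) k]
    refine Finset.prod_congr rfl fun i' _ => ?_
    congr 1
    rw [he']
    simp only [Fin.is_lt, dif_pos, Fin.eta]
  have h := int_prod Y Y₀ hMeas hIndep hId hInt (Finset.range k) e'
  constructor
  · refine h.1.congr ?_
    exact Filter.Eventually.of_forall fun ω => (hconv ω).symm
  · rw [show (∫ ω, ∏ i' : Fin k, (Y i' ω) ^ (e i')) = ∫ ω, ∏ i ∈ Finset.range k, (Y i ω) ^ (e' i) by
      congr 1; funext ω; exact hconv ω]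
    rw [h.2, ← Fin.prod_univ_eq_prod_range (fun i => ∫ ω, (Y₀ ω) ^ (e' i)) k]
    refine Finset.prod_congr rfl fun i' _ => ?_
    congr 1
    rw [he']
    simp only [Fin.is_lt, dif_pos, Fin.eta]

end

end Prob

noncomputable section Bridge
open MeasureTheory ProbabilityTheory

lemma coeff_E_Mpow (mu : ℕ → ℝ) (r : ℝ) (p N : ℕ) :
    (N.factorial : ℝ) * coeff N (Eser r * Mser mu ^ p)
      = ∑ j ∈ Finset.range (N+1), ∑ t ∈ Finset.Nat.antidiagonalTuple p j,
          (Nat.multinomial Finset.univ t : ℝ) * (∏ i', mu (t i')) *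
            (r ^ (N-j) * (N.choose j : ℝ)) := by
  rw [PowerSeries.coeff_mul,
    Finset.Nat.sum_antidiagonal_eq_sum_range_succ
      (f := fun u v => coeff u (Eser r) * coeff v (Mser mu ^ p))]
  rw [show (∑ u ∈ Finset.range (N+1), coeff u (Eser r) * coeff (N - u) (Mser mu ^ p))
      = ∑ j ∈ Finset.range (N+1), coeff (N - j) (Eser r) * coeff j (Mser mu ^ p) from
    Finset.sum_nbij' (i := fun u => N - u) (j := fun j => N - j)
      (fun u hu => by simp only [Finset.mem_range] at *; omega)
      (fun j hj => by simp only [Finset.mem_range] at *; omega)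
      (fun u hu => by simp only [Finset.mem_range] at hu; show N - (N - u) = u; omega)
      (fun j hj => by simp only [Finset.mem_range] at hj; show N - (N - j) = j; omega)
      (fun u hu => by
        simp only [Finset.mem_range] at hu
        have h1 : N - (N - u) = u := by omega
        rw [h1])]
  rw [Finset.mul_sum]
  refine Finset.sum_congr rfl fun j hj => ?_
  rw [Finset.mem_range] at hj
  have hjN : j ≤ N := by omega
  rw [coeff_pow_fin]
  simp only [Eser, Mser, coeff_mk]
  rw [Finset.mul_sum, Finset.mul_sum]
  refine Finset.sum_congr rfl fun t ht => ?_
  have htsum : ∑ i, t i = j := Finset.Nat.mem_antidiagonalTuple.1 ht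
  rw [multinomial_real t, htsum, choose_real hjN]
  have hprod : (∏ i, mu (t i) / ((t i).factorial : ℝ))
      = (∏ i, (((t i).factorial : ℝ))⁻¹) * ∏ i, mu (t i) := by
    rw [← Finset.prod_mul_distrib]
    refine Finset.prod_congr rfl fun i _ => ?_
    rw [div_eq_mul_inv]
    ring
  rw [hprod]
  have f1 : ((N.factorial : ℝ)) ≠ 0 := Nat.cast_ne_zero.2 (Nat.factorial_ne_zero _)
  have f2 : ((j.factorial : ℝ)) ≠ 0 := Nat.cast_ne_zero.2 (Nat.factorial_ne_zero _)
  have f3 : (((N-j).factorial : ℝ)) ≠ 0 := Nat.cast_ne_zero.2 (Nat.factorial_ne_zero _)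
  field_simp

lemma coeff_gmul_sub_one_pow (g f : PowerSeries ℝ) (N k : ℕ) :
    (∑ p ∈ Finset.range (k+1), (k.choose p : ℝ) * (-1:ℝ)^(k-p) * coeff N (g * f^p))
      = coeff N (g * (f - 1)^k) := by
  have hexp : (f - 1)^k = ∑ p ∈ Finset.range (k+1),
      PowerSeries.C ((-1:ℝ)^(k-p) * (k.choose p : ℝ)) * f^p := by
    rw [sub_eq_add_neg, add_pow]
    refine Finset.sum_congr rfl fun p hp => ?_
    rw [map_mul, map_pow, map_neg, map_one, map_natCast]
    ring
  rw [hexp, Finset.mul_sum, map_sum]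
  refine Finset.sum_congr rfl fun p hp => ?_
  rw [show g * (PowerSeries.C ((-1:ℝ)^(k-p) * (k.choose p : ℝ)) * f^p)
      = PowerSeries.C ((-1:ℝ)^(k-p) * (k.choose p : ℝ)) * (g * f^p) by ring]
  rw [PowerSeries.coeff_C_mul]
  ring

variable {Ω : Type*} [MeasureSpace Ω] [IsProbabilityMeasure (volume : Measure Ω)]
    (Y : ℕ → Ω → ℝ) (Y₀ : Ω → ℝ)
    (hMeas : ∀ i, Measurable (Y i))
    (hIndep : iIndepFun Y volume)
    (hId : ∀ i, IdentDistrib (Y i) Y₀ volume volume)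
    (hInt : ∀ q : ℕ, Integrable fun ω => (Y₀ ω) ^ q)

include hMeas hIndep hId hInt

lemma int_S_pow_mul (k q : ℕ) (l : Fin k → ℕ) :
    (∫ ω, (S Y k ω) ^ q * ∏ i' : Fin k, (Y i' ω) ^ (l i'))
      = ∑ t ∈ Finset.Nat.antidiagonalTuple k q, (Nat.multinomial Finset.univ t : ℝ) *
          ∏ i' : Fin k, ∫ ω, (Y₀ ω) ^ (t i' + l i') := by
  have hpt : ∀ ω, (S Y k ω) ^ q * ∏ i' : Fin k, (Y i' ω) ^ (l i')
      = ∑ t ∈ Finset.Nat.antidiagonalTuple k q, (Nat.multinomial Finset.univ t : ℝ) *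
          ∏ i' : Fin k, (Y i' ω) ^ (t i' + l i') := by
    intro ω
    have hS : S Y k ω = ∑ i' : Fin k, Y i' ω := by
      rw [S, ← Fin.sum_univ_eq_sum_range (fun i => Y i ω) k]
    rw [hS, Finset.sum_pow_eq_sum_piAntidiag, Finset.piAntidiag_univ_fin_eq_antidiagonalTuple q k,
      Finset.sum_mul]
    refine Finset.sum_congr rfl fun t ht => ?_
    rw [mul_assoc, ← Finset.prod_mul_distrib]
    congr 1
    refine Finset.prod_congr rfl fun i' _ => ?_
    rw [pow_add]
  rw [show (∫ ω, (S Y k ω) ^ q * ∏ i' : Fin k, (Y i' ω) ^ (l i'))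
      = ∫ ω, ∑ t ∈ Finset.Nat.antidiagonalTuple k q, (Nat.multinomial Finset.univ t : ℝ) *
          ∏ i' : Fin k, (Y i' ω) ^ (t i' + l i') by congr 1; funext ω; exact hpt ω]
  rw [integral_finset_sum _ (fun t _ =>
    ((int_prod_fin Y Y₀ hMeas hIndep hId hInt k (fun i' => t i' + l i')).1.const_mul _))]
  refine Finset.sum_congr rfl fun t ht => ?_
  rw [integral_const_mul, (int_prod_fin Y Y₀ hMeas hIndep hId hInt k (fun i' => t i' + l i')).2]

lemma int_SP (p N : ℕ) (r : ℝ) :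
    (∫ ω, (S Y p ω + r) ^ N)
      = (N.factorial : ℝ) * coeff N (Eser r * Mser (fun q => ∫ ω, (Y₀ ω) ^ q) ^ p) := by
  rw [coeff_E_Mpow]
  have hpt : ∀ ω, (S Y p ω + r) ^ N
      = ∑ j ∈ Finset.range (N+1), ∑ t ∈ Finset.Nat.antidiagonalTuple p j,
          (Nat.multinomial Finset.univ t : ℝ) * (∏ i' : Fin p, (Y i' ω) ^ (t i')) *
            (r ^ (N-j) * (N.choose j : ℝ)) := by
    intro ω
    rw [add_pow]
    refine Finset.sum_congr rfl fun j hj => ?_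
    have hS : S Y p ω = ∑ i' : Fin p, Y i' ω := by
      rw [S, ← Fin.sum_univ_eq_sum_range (fun i => Y i ω) p]
    rw [hS, Finset.sum_pow_eq_sum_piAntidiag, Finset.piAntidiag_univ_fin_eq_antidiagonalTuple j p,
      Finset.sum_mul, Finset.sum_mul]
    refine Finset.sum_congr rfl fun t ht => ?_
    ring
  rw [show (∫ ω, (S Y p ω + r) ^ N)
      = ∫ ω, ∑ j ∈ Finset.range (N+1), ∑ t ∈ Finset.Nat.antidiagonalTuple p j,
          (Nat.multinomial Finset.univ t : ℝ) * (∏ i' : Fin p, (Y i' ω) ^ (t i')) *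
            (r ^ (N-j) * (N.choose j : ℝ)) by congr 1; funext ω; exact hpt ω]
  rw [integral_finset_sum _ (fun j _ => integrable_finset_sum _ (fun t _ =>
    (((int_prod_fin Y Y₀ hMeas hIndep hId hInt p t).1.const_mul _).mul_const _)))]
  refine Finset.sum_congr rfl fun j hj => ?_
  rw [integral_finset_sum _ (fun t _ =>
    (((int_prod_fin Y Y₀ hMeas hIndep hId hInt p t).1.const_mul _).mul_const _))]
  refine Finset.sum_congr rfl fun t ht => ?_
  rw [integral_mul_const, integral_const_mul,
    (int_prod_fin Y Y₀ hMeas hIndep hId hInt p t).2]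

end Bridge


theorem probRBell_recurrence
    [IsProbabilityMeasure (volume : Measure Ω)]
    (Y : ℕ → Ω → ℝ) (Y₀ : Ω → ℝ)
    (hMeas : ∀ i, Measurable (Y i))
    (hIndep : iIndepFun Y volume)
    (hId : ∀ i, IdentDistrib (Y i) Y₀ volume volume)
    (hInt : ∀ m : ℕ, Integrable fun ω => (Y₀ ω) ^ m)
    (r : ℕ) (hr : 0 < r)
    (m n : ℕ) (x : ℝ) :
    phiRBell Y r (m + n) x =
      ∑ i ∈ Finset.range (n + 1), ∑ k ∈ Finset.range (m + 1),
        (n.choose i : ℝ) * phiRBell Y r i x * x ^ k * ((k.factorial : ℝ))⁻¹ *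
          ∑ j ∈ Finset.Icc k m, (m.choose j : ℝ) *
            ∑ l ∈ posTuples k j,
              (Nat.multinomial Finset.univ l : ℝ) * (r : ℝ) ^ (m - j) *
                ∫ ω, (S Y k ω) ^ (n - i) * ∏ i' : Fin k, (Y i' ω) ^ (l i') := by
  set mu : ℕ → ℝ := fun q => ∫ ω, (Y₀ ω) ^ q with hmu
  have hmu0 : mu 0 = 1 := by
    rw [hmu]
    simp
  have hstir : ∀ N k : ℕ, probRStirling Y r N k
      = ((k.factorial : ℝ))⁻¹ *
          ((N.factorial : ℝ) * coeff N (Eser (r:ℝ) * (Mser mu - 1)^k)) := by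
    intro N k
    rw [probRStirling]
    congr 1
    rw [← coeff_gmul_sub_one_pow (Eser (r:ℝ)) (Mser mu) N k, Finset.mul_sum]
    refine Finset.sum_congr rfl fun j hj => ?_
    rw [int_SP Y Y₀ hMeas hIndep hId hInt j N (r:ℝ)]
    ring
  have hphi : ∀ N : ℕ, phiRBell Y r N x
      = ∑ K ∈ Finset.range (N+1), ((K.factorial : ℝ))⁻¹ *
          ((N.factorial : ℝ) * coeff N (Eser (r:ℝ) * (Mser mu - 1)^K)) * x^K := by
    intro N
    rw [phiRBell]
    exact Finset.sum_congr rfl fun K _ => by rw [hstir]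
  rw [hphi (m+n), main_alg mu hmu0 (r:ℝ) x m n]
  refine Finset.sum_congr rfl fun i hi => Finset.sum_congr rfl fun k hk => ?_
  rw [← hphi i, Wfin]
  congr 1
  refine Finset.sum_congr rfl fun j hj => ?_
  congr 1
  refine Finset.sum_congr rfl fun l hl => ?_
  rw [int_S_pow_mul Y Y₀ hMeas hIndep hId hInt k (n-i) l]
  congr 1
  refine Finset.sum_congr rfl fun t _ => ?_
  congr 1
  refine Finset.prod_congr rfl fun i' _ => ?_
  simp only [hmu]
  rw [Nat.add_comm (l i') (t i')]

end
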